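/- Let X̃, X be categories and E a thin category (a preorder regarded as a category), ι : X̃ ⥤ X fully faithful, and G : X̃ ⥤ E, Gʳ : E ⥤ X̃ functors such that Gʳ ⋙ G = 𝟭 E and there exists a natural transformation G ⋙ Gʳ ⟶ 𝟭 X̃. Set K := Gʳ ⋙ ι : E ⥤ X. If D : X ⥤ E is a pointwise left Kan extension of 𝟭 E along K and L : X ⥤ E is a pointwise right Kan extension of 𝟭 E along K, then there exists a natural transformation D ⟶ L. -/
import Mathlib


open CategoryTheory

/-- If `E` is thin, `Gʳ ⋙ G = 𝟭 E`, `G ⋙ Gʳ ⟶ 𝟭 X̃`, `ι` is fully faithful,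
`D` is a pointwise left Kan extension of `𝟭 E` along `K := Gʳ ⋙ ι` and `L` is a pointwise
right Kan extension of `𝟭 E` along `K`, then there is a natural transformation `D ⟶ L`. -/
theorem pointwiseLeftKan_to_pointwiseRightKan
    {X' X E : Type*} [Category X'] [Category X] [Category E] [Quiver.IsThin E]
    (ι : X' ⥤ X) [ι.Full] [ι.Faithful]
    (G : X' ⥤ E) (Gr : E ⥤ X') (hGG : Gr ⋙ G = 𝟭 E) (η : G ⋙ Gr ⟶ 𝟭 X')
    (D : X ⥤ E) (αD : 𝟭 E ⟶ (Gr ⋙ ι) ⋙ D)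
    (hD : (Functor.LeftExtension.mk D αD).IsPointwiseLeftKanExtension)
    (L : X ⥤ E) (αL : (Gr ⋙ ι) ⋙ L ⟶ 𝟭 E)
    (hL : (Functor.RightExtension.mk L αL).IsPointwiseRightKanExtension) :
    Nonempty (D ⟶ L) := by
  constructor
  refine
    { app := fun x => (hD x).desc
        (Limits.Cocone.mk (L.obj x)
          { app := fun j => (hL x).lift
              (Limits.Cone.mk j.left
                { app := fun i =>
                    eqToHom (Functor.congr_obj hGG j.left).symm ≫
                      G.map (ι.preimage (j.hom ≫ i.hom)) ≫
                      eqToHom (Functor.congr_obj hGG i.right)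
                  naturality := fun _ _ _ => Subsingleton.elim _ _ })
            naturality := fun _ _ _ => Subsingleton.elim _ _ })
      naturality := fun _ _ _ => Subsingleton.elim _ _ }
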